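/- Multivariate deformed Vandermonde formula, second form: let 0 < τ₂ < τ₁ be reals, let n, k be naturals with k ≥ 1, and let x₁, …, x_{k+1} be real numbers. Then [x₁ + ⋯ + x_{k+1}]_n = Σ M(n; r₁,…,r_k) · τ₂^{Σ_{j=1}^{k} r_j(z_j − (n − s_j))} · τ₁^{Σ_{j=1}^{k} (n − s_j)(x_j − r_j)} · ∏_{j=1}^{k+1} [x_j]_{r_j}, where the sum runs over all tuples (r₁,…,r_k) of naturals with r₁ + ⋯ + r_k ≤ n, and where s_j = r₁ + ⋯ + r_j, r_{k+1} = n − s_k, and z_j = x_{j+1} + ⋯ + x_{k+1}. -/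

import Mathlib

open Finset

noncomputable def dnum (τ₁ τ₂ x : ℝ) : ℝ := (τ₁ ^ x - τ₂ ^ x) / (τ₁ - τ₂)

noncomputable def dfac (τ₁ τ₂ : ℝ) (r : ℕ) : ℝ :=
  ∏ j ∈ Finset.range r, dnum τ₁ τ₂ ((j : ℝ) + 1)

noncomputable def dfall (τ₁ τ₂ x : ℝ) (r : ℕ) : ℝ :=
  ∏ i ∈ Finset.range r, dnum τ₁ τ₂ (x - (i : ℝ))

noncomputable def dbinom (τ₁ τ₂ x : ℝ) (r : ℕ) : ℝ := dfall τ₁ τ₂ x r / dfac τ₁ τ₂ r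

noncomputable def dmulti (τ₁ τ₂ x : ℝ) {k : ℕ} (r : Fin k → ℕ) : ℝ :=
  dfall τ₁ τ₂ x (∑ j, r j) / ∏ j, dfac τ₁ τ₂ (r j)

variable {τ₁ τ₂ : ℝ}

lemma dnum_pos (hτ₂ : 0 < τ₂) (hττ : τ₂ < τ₁) {x : ℝ} (hx : 0 < x) : 0 < dnum τ₁ τ₂ x := by
  have h := Real.rpow_lt_rpow hτ₂.le hττ hx
  exact div_pos (sub_pos.2 h) (sub_pos.2 hττ)

lemma dnum_zero (τ₁ τ₂ : ℝ) : dnum τ₁ τ₂ 0 = 0 := by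
  simp [dnum]

lemma dfac_pos (hτ₂ : 0 < τ₂) (hττ : τ₂ < τ₁) (r : ℕ) : 0 < dfac τ₁ τ₂ r := by
  refine Finset.prod_pos fun j _ => dnum_pos hτ₂ hττ (by positivity)

lemma dnum_add (hτ₂ : 0 < τ₂) (hττ : τ₂ < τ₁) (a b : ℝ) :
    dnum τ₁ τ₂ (a + b) = τ₁ ^ a * dnum τ₁ τ₂ b + τ₂ ^ b * dnum τ₁ τ₂ a := by
  have h1 : (0:ℝ) < τ₁ := hτ₂.trans hττ
  have hne : τ₁ - τ₂ ≠ 0 := by linarith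
  unfold dnum
  rw [Real.rpow_add h1, Real.rpow_add hτ₂]
  field_simp
  ring

lemma dfall_zero (τ₁ τ₂ x : ℝ) : dfall τ₁ τ₂ x 0 = 1 := by simp [dfall]

lemma dfall_succ (τ₁ τ₂ x : ℝ) (n : ℕ) :
    dfall τ₁ τ₂ x (n + 1) = dfall τ₁ τ₂ x n * dnum τ₁ τ₂ (x - n) := by
  simp [dfall, Finset.prod_range_succ]

lemma dfall_add (τ₁ τ₂ x : ℝ) (a b : ℕ) :
    dfall τ₁ τ₂ x (a + b) = dfall τ₁ τ₂ x a * dfall τ₁ τ₂ (x - a) b := by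
  unfold dfall
  rw [Finset.prod_range_add]
  congr 1
  refine Finset.prod_congr rfl fun i _ => ?_
  push_cast
  ring_nf

lemma dfall_nat_succ_self (τ₁ τ₂ : ℝ) (n : ℕ) :
    dfall τ₁ τ₂ (n : ℝ) (n + 1) = 0 := by
  refine Finset.prod_eq_zero (Finset.self_mem_range_succ n) ?_
  simp [dnum_zero]

lemma dfall_succ' (τ₁ τ₂ x : ℝ) (r : ℕ) :
    dfall τ₁ τ₂ x (r + 1) = dfall τ₁ τ₂ (x - 1) r * dnum τ₁ τ₂ x := by
  unfold dfall
  rw [Finset.prod_range_succ']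
  congr 1
  · exact Finset.prod_congr rfl fun i _ => by push_cast; ring_nf
  · simp

lemma dfac_succ (τ₁ τ₂ : ℝ) (r : ℕ) :
    dfac τ₁ τ₂ (r + 1) = dfac τ₁ τ₂ r * dnum τ₁ τ₂ ((r : ℝ) + 1) := by
  simp [dfac, Finset.prod_range_succ]

lemma dpascal {τ₁ τ₂ : ℝ} (hτ₂ : 0 < τ₂) (hττ : τ₂ < τ₁) (n r : ℕ) :
    dbinom τ₁ τ₂ ((n : ℝ) + 1) (r + 1)
      = τ₂ ^ ((r : ℝ) + 1) * dbinom τ₁ τ₂ (n : ℝ) (r + 1)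
        + τ₁ ^ ((n : ℝ) - r) * dbinom τ₁ τ₂ (n : ℝ) r := by
  have hd : dfac τ₁ τ₂ r ≠ 0 := (dfac_pos hτ₂ hττ r).ne'
  have hc : dnum τ₁ τ₂ ((r : ℝ) + 1) ≠ 0 := (dnum_pos hτ₂ hττ (by positivity)).ne'
  have hadd := dnum_add hτ₂ hττ ((n : ℝ) - r) ((r : ℝ) + 1)
  have h1 : ((n : ℝ) - r) + ((r : ℝ) + 1) = (n : ℝ) + 1 := by ring
  rw [h1] at hadd
  unfold dbinom
  rw [dfall_succ', dfac_succ, dfall_succ, hadd]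
  have h2 : (n : ℝ) + 1 - 1 = (n : ℝ) := by ring
  rw [h2]
  field_simp
  ring

lemma dbinom_zero (τ₁ τ₂ x : ℝ) : dbinom τ₁ τ₂ x 0 = 1 := by
  simp [dbinom, dfall, dfac]

lemma dvan_point {τ₁ τ₂ : ℝ} (hτ₂ : 0 < τ₂) (hττ : τ₂ < τ₁) (x y : ℝ) (n a b : ℕ)
    (hab : a + b = n) :
    τ₂ ^ ((a : ℝ)) * dbinom τ₁ τ₂ (n:ℝ) a * τ₂ ^ ((a : ℝ) * (y - ((b : ℝ) + 1)))
        * τ₁ ^ (((b : ℝ) + 1) * (x - (a : ℝ))) * dfall τ₁ τ₂ x a * dfall τ₁ τ₂ y (b+1)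
      + τ₁ ^ ((b : ℝ)) * dbinom τ₁ τ₂ (n:ℝ) a * τ₂ ^ (((a : ℝ) + 1) * (y - (b : ℝ)))
        * τ₁ ^ ((b : ℝ) * (x - ((a : ℝ) + 1))) * dfall τ₁ τ₂ x (a+1) * dfall τ₁ τ₂ y b
    = (dbinom τ₁ τ₂ (n:ℝ) a * τ₂ ^ ((a : ℝ) * (y - (b : ℝ))) * τ₁ ^ ((b : ℝ) * (x - (a : ℝ)))
        * dfall τ₁ τ₂ x a * dfall τ₁ τ₂ y b) * dnum τ₁ τ₂ (x + y - (n : ℝ)) := by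
  have hτ₁ : (0:ℝ) < τ₁ := hτ₂.trans hττ
  have h1 : x + y - (n:ℝ) = (x - a) + (y - b) := by
    have h : (n:ℝ) = (a:ℝ) + b := by exact_mod_cast hab.symm
    rw [h]; ring
  rw [h1, dnum_add hτ₂ hττ, dfall_succ, dfall_succ]
  have ha0 : τ₂ ^ ((a:ℝ)) ≠ 0 := (Real.rpow_pos_of_pos hτ₂ _).ne'
  have hb0 : τ₁ ^ ((b:ℝ)) ≠ 0 := (Real.rpow_pos_of_pos hτ₁ _).ne'
  have e1 : τ₂ ^ ((a:ℝ) * (y - ((b:ℝ)+1))) = τ₂ ^ ((a:ℝ) * (y - (b:ℝ))) / τ₂ ^ ((a:ℝ)) := by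
    rw [← Real.rpow_sub hτ₂]; congr 1; ring
  have e2 : τ₁ ^ (((b:ℝ)+1) * (x - (a:ℝ))) = τ₁ ^ ((b:ℝ) * (x - (a:ℝ))) * τ₁ ^ (x - (a:ℝ)) := by
    rw [← Real.rpow_add hτ₁]; congr 1; ring
  have e3 : τ₂ ^ (((a:ℝ)+1) * (y - (b:ℝ))) = τ₂ ^ ((a:ℝ) * (y - (b:ℝ))) * τ₂ ^ (y - (b:ℝ)) := by
    rw [← Real.rpow_add hτ₂]; congr 1; ring
  have e4 : τ₁ ^ ((b:ℝ) * (x - ((a:ℝ)+1))) = τ₁ ^ ((b:ℝ) * (x - (a:ℝ))) / τ₁ ^ ((b:ℝ)) := by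
    rw [← Real.rpow_sub hτ₁]; congr 1; ring
  rw [e1, e2, e3, e4]
  field_simp

lemma dvan {τ₁ τ₂ : ℝ} (hτ₂ : 0 < τ₂) (hττ : τ₂ < τ₁) (x y : ℝ) (n : ℕ) :
    dfall τ₁ τ₂ (x + y) n = ∑ p ∈ Finset.HasAntidiagonal.antidiagonal n,
      dbinom τ₁ τ₂ (n : ℝ) p.1 * τ₂ ^ ((p.1 : ℝ) * (y - (p.2 : ℝ)))
        * τ₁ ^ ((p.2 : ℝ) * (x - (p.1 : ℝ))) * dfall τ₁ τ₂ x p.1 * dfall τ₁ τ₂ y p.2 := by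
  have hτ₁ : (0:ℝ) < τ₁ := hτ₂.trans hττ
  induction n with
  | zero => simp [dbinom_zero, dfall]
  | succ n ih =>
    rw [dfall_succ, ih, Finset.sum_mul]
    set f₂ : ℕ × ℕ → ℝ := fun p =>
      τ₂ ^ ((p.1 : ℝ)) * dbinom τ₁ τ₂ (n:ℝ) p.1 * τ₂ ^ ((p.1 : ℝ) * (y - (p.2 : ℝ)))
        * τ₁ ^ ((p.2 : ℝ) * (x - (p.1 : ℝ))) * dfall τ₁ τ₂ x p.1 * dfall τ₁ τ₂ y p.2 with hf₂
    set f₁ : ℕ × ℕ → ℝ := fun p =>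
      if p.1 = 0 then 0 else
      τ₁ ^ ((p.2 : ℝ)) * dbinom τ₁ τ₂ (n:ℝ) (p.1 - 1) * τ₂ ^ ((p.1 : ℝ) * (y - (p.2 : ℝ)))
        * τ₁ ^ ((p.2 : ℝ) * (x - (p.1 : ℝ))) * dfall τ₁ τ₂ x p.1 * dfall τ₁ τ₂ y p.2 with hf₁
    have key : ∀ p ∈ Finset.HasAntidiagonal.antidiagonal (n+1),
        dbinom τ₁ τ₂ ((n+1 : ℕ) : ℝ) p.1 * τ₂ ^ ((p.1 : ℝ) * (y - (p.2 : ℝ)))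
          * τ₁ ^ ((p.2 : ℝ) * (x - (p.1 : ℝ))) * dfall τ₁ τ₂ x p.1 * dfall τ₁ τ₂ y p.2
        = f₂ p + f₁ p := by
      rintro ⟨a, b⟩ hp
      rw [Finset.HasAntidiagonal.mem_antidiagonal] at hp
      match a with
      | 0 => simp [hf₂, hf₁, dbinom_zero]
      | (a+1) =>
        have hb : ((b : ℝ)) = (n : ℝ) - a := by
          have : a + 1 + b = n + 1 := hp
          have : a + b = n := by omega
          have : (n:ℝ) = (a:ℝ) + b := by exact_mod_cast this.symm
          rw [this]; ring
        have hpas := dpascal hτ₂ hττ n a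
        have hcast : ((n+1 : ℕ) : ℝ) = (n : ℝ) + 1 := by push_cast; ring
        rw [hcast, hpas, ← hb]
        simp only [hf₂, hf₁, if_neg (Nat.succ_ne_zero a), Nat.add_sub_cancel]
        push_cast
        ring
    rw [Finset.sum_congr rfl key, Finset.sum_add_distrib,
      Finset.Nat.sum_antidiagonal_succ' (f := f₂), Finset.Nat.sum_antidiagonal_succ (f := f₁)]
    have hz2 : f₂ (n+1, 0) = 0 := by
      have : dfall τ₁ τ₂ ((n:ℝ)) (n+1) = 0 := dfall_nat_succ_self τ₁ τ₂ n
      simp [hf₂, dbinom, this]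
    have hz1 : f₁ (0, n+1) = 0 := by simp [hf₁]
    rw [hz2, hz1, zero_add, zero_add, ← Finset.sum_add_distrib]
    refine (Finset.sum_congr rfl ?_).symm
    rintro ⟨a, b⟩ hp
    rw [Finset.HasAntidiagonal.mem_antidiagonal] at hp
    have := dvan_point hτ₂ hττ x y n a b hp
    simp only [hf₂, hf₁, if_neg (Nat.succ_ne_zero a), Nat.add_sub_cancel]
    push_cast
    push_cast at this
    linarith [this]

lemma Iic_filter {k : ℕ} (j : Fin k) :
    Finset.Iic j = Finset.univ.filter (fun i => i ≤ j) := by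
  ext i; simp

lemma Iic_zero_sum (k : ℕ) (f : Fin (k+1) → ℕ) : ∑ i ∈ Finset.Iic (0 : Fin (k+1)), f i = f 0 := by
  rw [Iic_filter, Finset.sum_filter, Fin.sum_univ_succ]
  simp [Fin.le_zero_iff, Fin.succ_ne_zero]

lemma Iic_cons_succ {k : ℕ} (a : ℕ) (r' : Fin k → ℕ) (j : Fin k) :
    ∑ i ∈ Finset.Iic (j.succ), (Fin.cons a r' : Fin (k+1) → ℕ) i
      = a + ∑ i ∈ Finset.Iic j, r' i := by
  rw [Iic_filter, Iic_filter, Finset.sum_filter, Finset.sum_filter, Fin.sum_univ_succ]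
  simp [Fin.succ_le_succ_iff]

lemma filter_succ_sum (k : ℕ) (x : Fin (k+2) → ℝ) (m : ℕ) :
    ∑ i ∈ Finset.univ.filter (fun i : Fin (k+2) => m + 1 < (i : ℕ)), x i
      = ∑ i ∈ Finset.univ.filter (fun i : Fin (k+1) => m < (i : ℕ)), x i.succ := by
  rw [Finset.sum_filter, Finset.sum_filter, Fin.sum_univ_succ]
  simp [Nat.succ_lt_succ_iff]

lemma filter_zero_sum (k : ℕ) (x : Fin (k+2) → ℝ) :
    ∑ i ∈ Finset.univ.filter (fun i : Fin (k+2) => 0 < (i : ℕ)), x i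
      = ∑ i : Fin (k+1), x i.succ := by
  rw [Finset.sum_filter, Fin.sum_univ_succ]
  simp

lemma snoc_cons_succ {k : ℕ} (a m : ℕ) (r' : Fin k → ℕ) (j : Fin (k+1)) :
    (Fin.snoc (Fin.cons a r') m : Fin (k+2) → ℕ) j.succ = (Fin.snoc r' m : Fin (k+1) → ℕ) j := by
  induction j using Fin.lastCases with
  | last => rw [Fin.succ_last]; simp
  | cast i => rw [Fin.succ_castSucc, Fin.snoc_castSucc, Fin.snoc_castSucc]; simp

lemma dmulti_cons {k : ℕ} (τ₁ τ₂ : ℝ) (n a b : ℕ) (hab : a + b = n) (r' : Fin k → ℕ) :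
    dmulti τ₁ τ₂ (n : ℝ) (Fin.cons a r' : Fin (k+1) → ℕ)
      = dbinom τ₁ τ₂ (n : ℝ) a * dmulti τ₁ τ₂ (b : ℝ) r' := by
  have hb : (n : ℝ) - (a : ℝ) = (b : ℝ) := by
    have : (n : ℝ) = (a : ℝ) + b := by exact_mod_cast hab.symm
    rw [this]; ring
  unfold dmulti dbinom
  have hsum : ∑ j, (Fin.cons a r' : Fin (k+1) → ℕ) j = a + ∑ j, r' j := by
    rw [Fin.sum_univ_succ]; simp
  have hprod : ∏ j, dfac τ₁ τ₂ ((Fin.cons a r' : Fin (k+1) → ℕ) j)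
      = dfac τ₁ τ₂ a * ∏ j, dfac τ₁ τ₂ (r' j) := by
    rw [Fin.prod_univ_succ]; simp
  rw [hsum, hprod, dfall_add, hb, div_mul_div_comm]

lemma sum_cons_split {M : Type*} [AddCommMonoid M] (k n : ℕ) (G : (Fin (k+1) → ℕ) → M) :
    ∑ r ∈ (Fintype.piFinset fun _ : Fin (k+1) => Finset.range (n+1)).filter
        (fun r => ∑ j, r j ≤ n), G r
      = ∑ a ∈ Finset.range (n+1),
          ∑ r' ∈ (Fintype.piFinset fun _ : Fin k => Finset.range (n - a + 1)).filter
            (fun r' => ∑ j, r' j ≤ n - a), G (Fin.cons a r') := by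
  rw [Finset.sum_sigma']
  refine Finset.sum_nbij' (fun r => ⟨r 0, Fin.tail r⟩) (fun p => Fin.cons p.1 p.2)
    ?_ ?_ ?_ ?_ ?_
  · rintro r hr
    simp only [Finset.mem_filter, Fintype.mem_piFinset, Finset.mem_range] at hr
    obtain ⟨hmem, hsum⟩ := hr
    rw [Fin.sum_univ_succ] at hsum
    have hteq : ∀ j, Fin.tail r j = r j.succ := fun _ => rfl
    have htail : ∀ j : Fin k, r j.succ ≤ ∑ i : Fin k, r i.succ := fun j =>
      Finset.single_le_sum (f := fun i : Fin k => r i.succ) (fun i _ => Nat.zero_le _)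
        (Finset.mem_univ j)
    simp only [Finset.mem_sigma, Finset.mem_filter, Fintype.mem_piFinset, Finset.mem_range, hteq]
    exact ⟨hmem 0, fun j => by have := htail j; omega, by omega⟩
  · rintro ⟨a, r'⟩ hp
    simp only [Finset.mem_sigma, Finset.mem_filter, Fintype.mem_piFinset, Finset.mem_range] at hp
    obtain ⟨ha, hmem, hsum⟩ := hp
    simp only [Finset.mem_filter, Fintype.mem_piFinset, Finset.mem_range]
    constructor
    · intro i
      induction i using Fin.cases with
      | zero => simpa using ha
      | succ j => have := hmem j; simp only [Fin.cons_succ]; omega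
    · rw [Fin.sum_univ_succ]
      simp only [Fin.cons_zero, Fin.cons_succ]
      omega
  · intro r _; exact Fin.cons_self_tail r
  · rintro ⟨a, r'⟩ _
    simp [Fin.tail_cons]
  · intro r _
    rw [Fin.cons_self_tail]

lemma big_term {τ₁ τ₂ : ℝ} (hτ₂ : 0 < τ₂) (hττ : τ₂ < τ₁) {k : ℕ} (n a b : ℕ)
    (hab : a + b = n) (x : Fin (k+2) → ℝ) (r' : Fin k → ℕ) :
    dmulti τ₁ τ₂ (n : ℝ) (Fin.cons a r' : Fin (k+1) → ℕ) *
      τ₂ ^ (∑ j : Fin (k+1), (((Fin.cons a r' : Fin (k+1) → ℕ) j : ℕ) : ℝ) *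
          ((∑ i ∈ Finset.univ.filter fun i : Fin (k+2) => (j : ℕ) < (i : ℕ), x i) -
            ((n : ℝ) - ((∑ i ∈ Finset.Iic j, (Fin.cons a r' : Fin (k+1) → ℕ) i : ℕ) : ℝ)))) *
      τ₁ ^ (∑ j : Fin (k+1), ((n : ℝ) - ((∑ i ∈ Finset.Iic j, (Fin.cons a r' : Fin (k+1) → ℕ) i : ℕ) : ℝ)) *
          (x j.castSucc - (((Fin.cons a r' : Fin (k+1) → ℕ) j : ℕ) : ℝ))) *
      ∏ j : Fin (k+2), dfall τ₁ τ₂ (x j)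
        ((Fin.snoc (Fin.cons a r' : Fin (k+1) → ℕ)
            (n - ∑ i, (Fin.cons a r' : Fin (k+1) → ℕ) i) : Fin (k+2) → ℕ) j)
    = dbinom τ₁ τ₂ (n : ℝ) a * τ₂ ^ ((a : ℝ) * ((∑ i : Fin (k+1), x i.succ) - (b : ℝ)))
        * τ₁ ^ ((b : ℝ) * (x 0 - (a : ℝ))) * dfall τ₁ τ₂ (x 0) a *
      (dmulti τ₁ τ₂ (b : ℝ) r' *
        τ₂ ^ (∑ j : Fin k, ((r' j : ℕ) : ℝ) *
            ((∑ i ∈ Finset.univ.filter fun i : Fin (k+1) => (j : ℕ) < (i : ℕ), x i.succ) -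
              ((b : ℝ) - ((∑ i ∈ Finset.Iic j, r' i : ℕ) : ℝ)))) *
        τ₁ ^ (∑ j : Fin k, ((b : ℝ) - ((∑ i ∈ Finset.Iic j, r' i : ℕ) : ℝ)) *
            ((x j.castSucc.succ) - ((r' j : ℕ) : ℝ))) *
        ∏ j : Fin (k+1), dfall τ₁ τ₂ (x j.succ)
          ((Fin.snoc r' (b - ∑ i, r' i) : Fin (k+1) → ℕ) j)) := by
  have hτ₁ : (0:ℝ) < τ₁ := hτ₂.trans hττ
  have hn : (n : ℝ) = (a : ℝ) + b := by exact_mod_cast hab.symm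
  -- multinomial split
  rw [dmulti_cons τ₁ τ₂ n a b hab r']
  -- τ₂ exponent split
  have e2 : (∑ j : Fin (k+1), (((Fin.cons a r' : Fin (k+1) → ℕ) j : ℕ) : ℝ) *
          ((∑ i ∈ Finset.univ.filter fun i : Fin (k+2) => (j : ℕ) < (i : ℕ), x i) -
            ((n : ℝ) - ((∑ i ∈ Finset.Iic j, (Fin.cons a r' : Fin (k+1) → ℕ) i : ℕ) : ℝ))))
      = (a : ℝ) * ((∑ i : Fin (k+1), x i.succ) - (b : ℝ))
        + ∑ j : Fin k, ((r' j : ℕ) : ℝ) *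
            ((∑ i ∈ Finset.univ.filter fun i : Fin (k+1) => (j : ℕ) < (i : ℕ), x i.succ) -
              ((b : ℝ) - ((∑ i ∈ Finset.Iic j, r' i : ℕ) : ℝ))) := by
    rw [Fin.sum_univ_succ]
    congr 1
    · rw [Iic_zero_sum]
      simp only [Fin.cons_zero]
      rw [Finset.sum_filter, Fin.sum_univ_succ]
      simp only [Fin.val_zero, Fin.val_succ, lt_self_iff_false, Nat.zero_lt_succ, ↓reduceIte, zero_add]
      rw [hn]; push_cast; ring
    · refine Finset.sum_congr rfl fun j _ => ?_
      rw [Iic_cons_succ, Fin.cons_succ]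
      simp only [Fin.val_succ, filter_succ_sum]
      rw [hn]; push_cast; ring
  -- τ₁ exponent split
  have e1 : (∑ j : Fin (k+1), ((n : ℝ) - ((∑ i ∈ Finset.Iic j, (Fin.cons a r' : Fin (k+1) → ℕ) i : ℕ) : ℝ)) *
          (x j.castSucc - (((Fin.cons a r' : Fin (k+1) → ℕ) j : ℕ) : ℝ)))
      = (b : ℝ) * (x 0 - (a : ℝ))
        + ∑ j : Fin k, ((b : ℝ) - ((∑ i ∈ Finset.Iic j, r' i : ℕ) : ℝ)) *
            ((x j.castSucc.succ) - ((r' j : ℕ) : ℝ)) := by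
    rw [Fin.sum_univ_succ]
    congr 1
    · rw [Iic_zero_sum]
      simp only [Fin.cons_zero, Fin.castSucc_zero]
      rw [hn]; push_cast; ring
    · refine Finset.sum_congr rfl fun j _ => ?_
      rw [Iic_cons_succ, Fin.cons_succ, Fin.succ_castSucc]
      rw [hn]; push_cast; ring
  -- product split
  have e3 : (∏ j : Fin (k+2), dfall τ₁ τ₂ (x j)
        ((Fin.snoc (Fin.cons a r' : Fin (k+1) → ℕ)
            (n - ∑ i, (Fin.cons a r' : Fin (k+1) → ℕ) i) : Fin (k+2) → ℕ) j))
      = dfall τ₁ τ₂ (x 0) a *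
        ∏ j : Fin (k+1), dfall τ₁ τ₂ (x j.succ)
          ((Fin.snoc r' (b - ∑ i, r' i) : Fin (k+1) → ℕ) j) := by
    rw [Fin.prod_univ_succ]
    have hsum : (∑ i, (Fin.cons a r' : Fin (k+1) → ℕ) i) = a + ∑ i, r' i := by
      rw [Fin.sum_univ_succ]; simp
    have hm : n - (a + ∑ i, r' i) = b - ∑ i, r' i := by omega
    congr 1
    · refine Finset.prod_congr rfl fun j _ => ?_
      rw [hsum, hm, snoc_cons_succ]
  rw [e2, e1, e3, Real.rpow_add hτ₂, Real.rpow_add hτ₁]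
  ring

lemma dvan_multi {τ₁ τ₂ : ℝ} (hτ₂ : 0 < τ₂) (hττ : τ₂ < τ₁) :
    ∀ (k : ℕ) (n : ℕ) (x : Fin (k + 1) → ℝ),
    dfall τ₁ τ₂ (∑ i, x i) n =
      ∑ r ∈ (Fintype.piFinset fun _ : Fin k => Finset.range (n + 1)).filter
          (fun r => ∑ j, r j ≤ n),
        dmulti τ₁ τ₂ (n : ℝ) r *
          τ₂ ^ (∑ j : Fin k, (r j : ℝ) *
              ((∑ i ∈ Finset.univ.filter fun i : Fin (k + 1) => (j : ℕ) < (i : ℕ), x i) -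
                ((n : ℝ) - ((∑ i ∈ Finset.Iic j, r i : ℕ) : ℝ)))) *
          τ₁ ^ (∑ j : Fin k, ((n : ℝ) - ((∑ i ∈ Finset.Iic j, r i : ℕ) : ℝ)) *
              (x j.castSucc - (r j : ℝ))) *
          ∏ j : Fin (k + 1), dfall τ₁ τ₂ (x j)
            ((Fin.snoc r (n - ∑ i, r i) : Fin (k + 1) → ℕ) j) := by
  intro k
  induction k with
  | zero =>
    intro n x
    have hmem : (fun (i : Fin 0) => i.elim0) ∈
        (Fintype.piFinset fun _ : Fin 0 => Finset.range (n + 1)).filter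
          (fun r => ∑ j, r j ≤ n) := by
      simp only [Finset.mem_filter, Fintype.mem_piFinset]
      exact ⟨fun i => i.elim0, by simp⟩
    rw [Finset.sum_eq_single_of_mem _ hmem (fun b _ hb =>
      absurd (funext fun i => i.elim0) hb)]
    simp [dmulti, dfall_zero, Fin.snoc, dfall]
  | succ k ih =>
    intro n x
    rw [Fin.sum_univ_succ, dvan hτ₂ hττ (x 0) (∑ i : Fin (k+1), x i.succ) n,
      Finset.Nat.sum_antidiagonal_eq_sum_range_succ_mk, sum_cons_split]
    refine Finset.sum_congr rfl fun a ha => ?_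
    rw [Finset.mem_range] at ha
    have hb : a + (n - a) = n := by omega
    dsimp only
    rw [ih (n - a) (fun i => x i.succ), Finset.mul_sum]
    refine Finset.sum_congr rfl fun r' _ => ?_
    exact (big_term hτ₂ hττ n a (n - a) hb x r').symm

/-- Multivariate deformed Vandermonde formula, second form:
`[x₁+⋯+x_{k+1}]_n = Σ M(n; r₁,…,r_k) τ₂^{Σ_j r_j(z_j−(n−s_j))}
  τ₁^{Σ_j (n−s_j)(x_j−r_j)} Π_j [x_j]_{r_j}`,
summed over tuples `(r₁,…,r_k)` with `r₁+⋯+r_k ≤ n`, where `s_j = r₁+⋯+r_j`,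
`r_{k+1} = n − s_k` and `z_j = x_{j+1}+⋯+x_{k+1}`. -/
theorem deformed_multivariate_vandermonde_second
    (τ₁ τ₂ : ℝ) (hτ₂ : 0 < τ₂) (hττ : τ₂ < τ₁)
    (n k : ℕ) (hk : 1 ≤ k) (x : Fin (k + 1) → ℝ) :
    dfall τ₁ τ₂ (∑ i, x i) n =
      ∑ r ∈ (Fintype.piFinset fun _ : Fin k => Finset.range (n + 1)).filter
          (fun r => ∑ j, r j ≤ n),
        dmulti τ₁ τ₂ (n : ℝ) r *
          τ₂ ^ (∑ j : Fin k, (r j : ℝ) *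
              ((∑ i ∈ Finset.univ.filter fun i : Fin (k + 1) => (j : ℕ) < (i : ℕ), x i) -
                ((n : ℝ) - ((∑ i ∈ Finset.Iic j, r i : ℕ) : ℝ)))) *
          τ₁ ^ (∑ j : Fin k, ((n : ℝ) - ((∑ i ∈ Finset.Iic j, r i : ℕ) : ℝ)) *
              (x j.castSucc - (r j : ℝ))) *
          ∏ j : Fin (k + 1), dfall τ₁ τ₂ (x j) ((Fin.snoc r (n - ∑ i, r i) : Fin (k + 1) → ℕ) j) :=
  dvan_multi hτ₂ hττ k n x
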